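/- arXiv:2211.06999 — 2 statements merged into one kernel-verified Lean document; each statement's English description precedes it below -/
import Mathlib

section
/- Curve-degree of x^{4n−1} on an even quartic curve y² = φ(x) (degree claim in the proof of Proposition 4.1, case (eq. for Y^{(2,4)})): Suppose φ is even (φ.comp(−X) = φ, i.e. all odd-degree coefficients of φ vanish) and Polynomial.degree φ = 4, and let n ≥ 1. Then: (a) there exists Q ∈ R with totalDegree Q ≤ 2n + 1 and x^(4n − 1) − Q ∈ I_2; and (b) for every Q ∈ R with x^(4n − 1) − Q ∈ I_2, one has 2n + 1 ≤ totalDegree Q. Hence the minimal degree of x^{4n−1} on the curve y² = φ(x) equals 2n + 1. -/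
open Polynomial in
private lemma comp_neg_coeff (p : Polynomial ℝ) (m : ℕ) :
    (p.comp (-X)).coeff m = (-1 : ℝ)^m * p.coeff m := by
  induction p using Polynomial.induction_on' with
  | add p q hp hq => simp [add_comp, hp, hq, mul_add]
  | monomial k c =>
      rw [monomial_comp, neg_pow, coeff_monomial]
      have : (C c * ((-1)^k * X ^ k) : ℝ[X]) = C ((-1)^k * c) * X ^ k := by
        rw [C_mul, C_pow, map_neg, C_1]; ring
      rw [this, coeff_C_mul, coeff_X_pow]
      by_cases h : k = m
      · simp [h]
      · simp [h, Ne.symm h]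

open Polynomial in
private lemma even_coeff_odd {p : Polynomial ℝ} (hp : p.comp (-X) = p) {m : ℕ}
    (hm : Odd m) : p.coeff m = 0 := by
  have := comp_neg_coeff p m
  rw [hp, hm.neg_one_pow] at this
  linarith

open Polynomial in
private lemma mod_aux (φ p : Polynomial ℝ) (j r : ℕ) (hr : r < 2) :
    (C p * X ^ (2 * j + r)) %ₘ (X ^ 2 - C φ) = C (p * φ ^ j) * X ^ r := by
  have hf : (X ^ 2 - C φ : Polynomial (Polynomial ℝ)).Monic :=
    monic_X_pow_sub (degree_C_le.trans_lt (by norm_num))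
  obtain ⟨c, hc⟩ := sub_dvd_pow_sub_pow (X ^ 2 : Polynomial (Polynomial ℝ)) (C φ) j
  have hkey : (C p * X ^ (2 * j + r) : Polynomial (Polynomial ℝ)) =
      (X ^ 2 - C φ) * (C p * X ^ r * c) + C (p * φ ^ j) * X ^ r := by
    rw [pow_add, pow_mul, C_mul, C_pow]
    linear_combination (C p * (X:Polynomial (Polynomial ℝ)) ^ r) * hc
  rw [hkey, add_modByMonic]
  have h0 : ((X ^ 2 - C φ) * (C p * X ^ r * c)) %ₘ (X ^ 2 - C φ) = 0 :=
    (modByMonic_eq_zero_iff_dvd hf).mpr (dvd_mul_right _ _)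
  have h1 : (C (p * φ ^ j) * X ^ r) %ₘ (X ^ 2 - C φ) = C (p * φ ^ j) * X ^ r := by
    rw [modByMonic_eq_self_iff hf, degree_X_pow_sub_C (by norm_num)]
    refine lt_of_le_of_lt (degree_mul_le _ _) ?_
    refine lt_of_le_of_lt (add_le_add degree_C_le (degree_X_pow r).le) ?_
    rw [zero_add]
    exact_mod_cast (by exact_mod_cast hr : (r : WithBot ℕ) < 2)
  rw [h0, h1, zero_add]

private lemma totalDegree_aeval_le (p : Polynomial ℝ) :
    (Polynomial.aeval (MvPolynomial.X 0 : MvPolynomial (Fin 2) ℝ) p).totalDegree ≤ p.natDegree := by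
  rw [Polynomial.aeval_eq_sum_range]
  refine (MvPolynomial.totalDegree_finset_sum _ _).trans (Finset.sup_le fun i hi => ?_)
  refine (MvPolynomial.totalDegree_smul_le _ _).trans ?_
  refine (MvPolynomial.totalDegree_pow _ _).trans ?_
  rw [MvPolynomial.totalDegree_X, mul_one]
  exact Nat.lt_succ_iff.mp (Finset.mem_range.mp hi)



/-- The minimal degree of `x^{4n-1}` on an even quartic curve `y² = φ(x)`,
`deg φ = 4`, `φ` even, equals `2n + 1`. -/
theorem curve_degree_x_pow_even_quartic
    (φ : Polynomial ℝ) (hev : φ.comp (-Polynomial.X) = φ) (hφ : φ.degree = 4)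
    (n : ℕ) (hn : 1 ≤ n) :
    (∃ Q : MvPolynomial (Fin 2) ℝ, Q.totalDegree ≤ 2 * n + 1 ∧
      (MvPolynomial.X 0 : MvPolynomial (Fin 2) ℝ) ^ (4 * n - 1) - Q ∈
        Ideal.span {(MvPolynomial.X 1 : MvPolynomial (Fin 2) ℝ) ^ 2 -
          Polynomial.aeval (MvPolynomial.X 0 : MvPolynomial (Fin 2) ℝ) φ}) ∧
    (∀ Q : MvPolynomial (Fin 2) ℝ,
      (MvPolynomial.X 0 : MvPolynomial (Fin 2) ℝ) ^ (4 * n - 1) - Q ∈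
        Ideal.span {(MvPolynomial.X 1 : MvPolynomial (Fin 2) ℝ) ^ 2 -
          Polynomial.aeval (MvPolynomial.X 0 : MvPolynomial (Fin 2) ℝ) φ} →
      2 * n + 1 ≤ Q.totalDegree) := by
  constructor
  · -- Part (a): existence
    have hφ0 : φ ≠ 0 := fun h => by simp [h] at hφ
    have hφn : φ.natDegree = 4 := Polynomial.natDegree_eq_of_degree_eq_some hφ
    set a : ℝ := φ.coeff 4 with ha_def
    have ha : a ≠ 0 := by
      have := Polynomial.leadingCoeff_ne_zero.mpr hφ0
      rwa [Polynomial.leadingCoeff, hφn] at this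
    obtain ⟨m, rfl⟩ : ∃ m, n = m + 1 := ⟨n - 1, by omega⟩
    set x := (MvPolynomial.X 0 : MvPolynomial (Fin 2) ℝ) with hx_def
    set y := (MvPolynomial.X 1 : MvPolynomial (Fin 2) ℝ) with hy_def
    set r : Polynomial ℝ := φ - Polynomial.C a * Polynomial.X ^ 4 with hr_def
    have hrdeg : r.natDegree ≤ 2 := by
      refine Polynomial.natDegree_le_iff_coeff_eq_zero.mpr fun N hN => ?_
      rw [hr_def, Polynomial.coeff_sub, Polynomial.coeff_C_mul, Polynomial.coeff_X_pow]
      rcases Nat.lt_or_ge N 5 with h5 | h5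
      · interval_cases N
        · rw [even_coeff_odd hev ⟨1, by norm_num⟩]; norm_num
        · simp [ha_def]
      · rw [Polynomial.coeff_eq_zero_of_natDegree_lt (by omega : φ.natDegree < N),
          if_neg (by omega)]
        ring
    have hΦ : Polynomial.aeval x φ = MvPolynomial.C a * x ^ 4 + Polynomial.aeval x r := by
      conv_lhs => rw [show φ = Polynomial.C a * Polynomial.X ^ 4 + r from by rw [hr_def]; ring]
      simp [map_add, map_mul, map_pow, Polynomial.aeval_C, Polynomial.aeval_X,
        MvPolynomial.algebraMap_eq]
    set R : MvPolynomial (Fin 2) ℝ := Polynomial.aeval x r with hR_def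
    refine ⟨MvPolynomial.C (a⁻¹ ^ m) * x ^ 3 * (y ^ 2 - R) ^ m, ?_, ?_⟩
    · -- degree bound
      refine (MvPolynomial.totalDegree_mul _ _).trans ?_
      have h1 : (MvPolynomial.C (a⁻¹ ^ m) * x ^ 3 : MvPolynomial (Fin 2) ℝ).totalDegree ≤ 3 := by
        refine (MvPolynomial.totalDegree_mul _ _).trans ?_
        rw [MvPolynomial.totalDegree_C, MvPolynomial.totalDegree_X_pow]
      have h2 : ((y ^ 2 - R) ^ m).totalDegree ≤ m * 2 := by
        refine (MvPolynomial.totalDegree_pow _ _).trans (Nat.mul_le_mul_left m ?_)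
        refine (MvPolynomial.totalDegree_sub _ _).trans (max_le ?_ ?_)
        · rw [MvPolynomial.totalDegree_X_pow]
        · exact (totalDegree_aeval_le r).trans hrdeg
      omega
    · -- membership
      rw [show 4 * (m + 1) - 1 = 4 * m + 3 from by omega]
      refine Ideal.mem_span_singleton.mpr ?_
      have h1 : (y ^ 2 - R) - MvPolynomial.C a * x ^ 4 = y ^ 2 - Polynomial.aeval x φ := by
        rw [hΦ]; ring
      obtain ⟨c, hc⟩ := sub_dvd_pow_sub_pow (y ^ 2 - R) (MvPolynomial.C a * x ^ 4) m
      rw [h1] at hc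
      have hC : (MvPolynomial.C (a⁻¹ ^ m) : MvPolynomial (Fin 2) ℝ) * (MvPolynomial.C a) ^ m = 1 := by
        rw [← map_pow, ← map_mul, ← mul_pow, inv_mul_cancel₀ ha, one_pow, map_one]
      refine ⟨-(MvPolynomial.C (a⁻¹ ^ m) * x ^ 3 * c), ?_⟩
      linear_combination (-(MvPolynomial.C (a⁻¹ ^ m) * x ^ 3)) * hc - x ^ (4 * m + 3) * hC
  · -- Part (b): lower bound
    have hφn : φ.natDegree = 4 := Polynomial.natDegree_eq_of_degree_eq_some hφ
    intro Q hQ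
    by_contra hlt
    push_neg at hlt
    have hdeg : Q.totalDegree ≤ 2 * n := by omega
    set N := 4 * n - 1 with hN_def
    have hNodd : Odd N := ⟨2 * n - 1, by omega⟩
    set v : Fin 2 → Polynomial (Polynomial ℝ) := ![Polynomial.C Polynomial.X, Polynomial.X] with hv
    set θ := MvPolynomial.aeval (R := ℝ) v with hθ
    have hθx : θ (MvPolynomial.X 0) = Polynomial.C Polynomial.X := by
      simp [hθ, hv, MvPolynomial.aeval_X]
    have hθy : θ (MvPolynomial.X 1) = Polynomial.X := by
      simp [hθ, hv, MvPolynomial.aeval_X]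
    set f : Polynomial (Polynomial ℝ) := Polynomial.X ^ 2 - Polynomial.C φ with hf_def
    have hf : f.Monic := Polynomial.monic_X_pow_sub (Polynomial.degree_C_le.trans_lt (by norm_num))
    have hθΦ : θ (Polynomial.aeval (MvPolynomial.X 0) φ) = Polynomial.C φ := by
      have h1 : θ (Polynomial.aeval (MvPolynomial.X 0) φ) =
          Polynomial.aeval (θ (MvPolynomial.X 0)) φ :=
        (Polynomial.aeval_algHom_apply θ (MvPolynomial.X 0) φ).symm
      have h2 : Polynomial.aeval ((Polynomial.CAlgHom (R := ℝ) (A := Polynomial ℝ))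
            Polynomial.X) φ = Polynomial.CAlgHom (Polynomial.aeval Polynomial.X φ) :=
        Polynomial.aeval_algHom_apply _ _ _
      rw [h1, hθx,
        show (Polynomial.C Polynomial.X : Polynomial (Polynomial ℝ)) =
          (Polynomial.CAlgHom (R := ℝ) (A := Polynomial ℝ)) Polynomial.X from rfl,
        h2, Polynomial.aeval_X_left_apply]
      rfl
    have hgen : θ ((MvPolynomial.X 1) ^ 2 - Polynomial.aeval (MvPolynomial.X 0) φ) = f := by
      rw [map_sub, map_pow, hθy, hθΦ]
    obtain ⟨H, hH⟩ := Ideal.mem_span_singleton.mp hQ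
    have hdvd : f ∣ Polynomial.C (Polynomial.X ^ N) - θ Q := by
      refine ⟨θ H, ?_⟩
      have h := congrArg θ hH
      rwa [map_sub, map_mul, hgen, map_pow, hθx, ← Polynomial.C_pow] at h
    have hmodQ : θ Q %ₘ f = Polynomial.C (Polynomial.X ^ N) := by
      have h0 : (Polynomial.C (Polynomial.X ^ N) - θ Q) %ₘ f = 0 :=
        (Polynomial.modByMonic_eq_zero_iff_dvd hf).mpr hdvd
      have hself : Polynomial.C (Polynomial.X ^ N) %ₘ f = Polynomial.C (Polynomial.X ^ N) := by
        rw [Polynomial.modByMonic_eq_self_iff hf, hf_def,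
          Polynomial.degree_X_pow_sub_C (by norm_num)]
        exact Polynomial.degree_C_le.trans_lt (by norm_num)
      rw [Polynomial.sub_modByMonic, hself] at h0
      exact (sub_eq_zero.mp h0).symm
    have hcoeff : ((θ Q %ₘ f).coeff 0).coeff N = 1 := by
      rw [hmodQ, Polynomial.coeff_C_zero]
      simp [Polynomial.coeff_X_pow]
    have hzero : ((θ Q %ₘ f).coeff 0).coeff N = 0 := by
      conv_lhs => rw [Q.as_sum]
      rw [map_sum,
        show (∑ s ∈ Q.support, θ (MvPolynomial.monomial s (MvPolynomial.coeff s Q))) %ₘ f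
          = ∑ s ∈ Q.support, (θ (MvPolynomial.monomial s (MvPolynomial.coeff s Q)) %ₘ f) from by
          simpa only [Polynomial.modByMonicHom_apply] using
            map_sum (Polynomial.modByMonicHom f)
              (fun s => θ (MvPolynomial.monomial s (MvPolynomial.coeff s Q))) Q.support,
        Polynomial.finset_sum_coeff, Polynomial.finset_sum_coeff]
      refine Finset.sum_eq_zero fun s hs => ?_
      have hik : s 0 + s 1 ≤ 2 * n := by
        have h1 := MvPolynomial.le_totalDegree hs
        have h2 : (s.sum fun _ e => e) = s 0 + s 1 := by
          rw [Finsupp.sum_fintype _ _ fun _ => rfl]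
          exact Fin.sum_univ_two _
        omega
      have hmono : θ (MvPolynomial.monomial s (MvPolynomial.coeff s Q)) =
          Polynomial.C (Polynomial.C (MvPolynomial.coeff s Q) * Polynomial.X ^ (s 0)) *
            Polynomial.X ^ (s 1) := by
        rw [hθ, MvPolynomial.aeval_monomial, Finsupp.prod_pow, Fin.prod_univ_two]
        simp only [hv, Matrix.cons_val_zero, Matrix.cons_val_one, Matrix.head_cons]
        rw [Polynomial.algebraMap_apply, ← Polynomial.C_pow, ← mul_assoc, ← Polynomial.C_mul]
        norm_num
      have hmod := mod_aux φ (Polynomial.C (MvPolynomial.coeff s Q) * Polynomial.X ^ (s 0))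
        (s 1 / 2) (s 1 % 2) (Nat.mod_lt _ (by norm_num))
      rw [Nat.div_add_mod, ← hf_def] at hmod
      rw [hmono, hmod]
      rcases Nat.even_or_odd (s 1) with hk | hk
      · have hk2 : s 1 % 2 = 0 := Nat.even_iff.mp hk
        rw [hk2, pow_zero, mul_one, Polynomial.coeff_C_zero, mul_assoc,
          Polynomial.coeff_C_mul]
        rcases Nat.even_or_odd (s 0) with hi | hi
        · have hcomp : ((Polynomial.X ^ (s 0) * φ ^ (s 1 / 2)).comp (-Polynomial.X)) =
              Polynomial.X ^ (s 0) * φ ^ (s 1 / 2) := by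
            rw [Polynomial.mul_comp, Polynomial.X_pow_comp, Polynomial.pow_comp, hev,
              hi.neg_pow]
          rw [even_coeff_odd hcomp hNodd, mul_zero]
        · have hdeg2 : (Polynomial.X ^ (s 0) * φ ^ (s 1 / 2)).natDegree < N := by
            refine lt_of_le_of_lt Polynomial.natDegree_mul_le ?_
            have h1 : (Polynomial.X ^ (s 0) : Polynomial ℝ).natDegree = s 0 :=
              Polynomial.natDegree_X_pow _
            have h2 : (φ ^ (s 1 / 2)).natDegree ≤ (s 1 / 2) * 4 := by
              refine Polynomial.natDegree_pow_le.trans ?_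
              rw [hφn]
            obtain ⟨t, ht⟩ := hi
            omega
          rw [Polynomial.coeff_eq_zero_of_natDegree_lt hdeg2, mul_zero]
      · have hk2 : s 1 % 2 = 1 := Nat.odd_iff.mp hk
        rw [hk2, pow_one, Polynomial.coeff_C_mul, Polynomial.coeff_X_zero]
        simp
    rw [hcoeff] at hzero
    exact one_ne_zero hzero
end

section
/- Curve-degree bound for univariate polynomials on y = φ(x) (the claim (eq:degp1) used in the proof of Proposition C1struct: deg_{γ_{1,d}}(P^{(1,d)}_{j,0}) < n+1 for j < d−1+d(n+2−d)): Suppose Polynomial.degree φ = d with d ≥ 1. Then for every s ≥ 1 and every univariate real polynomial g with Polynomial.natDegree g + 2 ≤ d + d * s, there exists Q ∈ R with totalDegree Q + 2 ≤ d + s and Polynomial.aeval x g − Q ∈ I_1. (That is, every univariate polynomial of degree at most d − 2 + d·s has minimal degree at most d − 2 + s on the curve y = φ(x).) -/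
open MvPolynomial Polynomial

lemma totalDegree_aeval_X_le (p : Polynomial ℝ) (i : Fin 2) :
    (Polynomial.aeval (MvPolynomial.X i : MvPolynomial (Fin 2) ℝ) p).totalDegree ≤ p.natDegree := by
  rw [Polynomial.aeval_eq_sum_range]
  refine (MvPolynomial.totalDegree_finset_sum _ _).trans (Finset.sup_le fun j hj => ?_)
  rw [Finset.mem_range] at hj
  calc (p.coeff j • (MvPolynomial.X i : MvPolynomial (Fin 2) ℝ) ^ j).totalDegree
      ≤ ((MvPolynomial.X i : MvPolynomial (Fin 2) ℝ) ^ j).totalDegree :=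
        MvPolynomial.totalDegree_smul_le _ _
    _ = j := MvPolynomial.totalDegree_X_pow _ _
    _ ≤ p.natDegree := by omega

/-- Curve-degree bound for univariate polynomials on `y = φ(x)`: every
univariate polynomial of degree at most `d - 2 + d·s` has minimal degree at
most `d - 2 + s` on the curve. -/
theorem curve_degree_bound_univariate_m1
    (d : ℕ) (hd : 1 ≤ d) (φ : Polynomial ℝ) (hφ : φ.degree = d)
    (s : ℕ) (hs : 1 ≤ s) (g : Polynomial ℝ)
    (hg : g.natDegree + 2 ≤ d + d * s) :
    ∃ Q : MvPolynomial (Fin 2) ℝ, Q.totalDegree + 2 ≤ d + s ∧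
      Polynomial.aeval (MvPolynomial.X 0 : MvPolynomial (Fin 2) ℝ) g - Q ∈
        Ideal.span {(MvPolynomial.X 1 : MvPolynomial (Fin 2) ℝ) ^ 1 -
          Polynomial.aeval (MvPolynomial.X 0 : MvPolynomial (Fin 2) ℝ) φ} := by
  have φne : φ ≠ 0 := fun h => by simp [h] at hφ
  have hφd : φ.natDegree = d := Polynomial.natDegree_eq_of_degree_eq_some hφ
  have hc : φ.leadingCoeff⁻¹ ≠ 0 := inv_ne_zero (Polynomial.leadingCoeff_ne_zero.2 φne)
  -- division with remainder by φ
  have div : ∀ g : Polynomial ℝ, ∃ q r : Polynomial ℝ,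
      g = φ * q + r ∧ (q = 0 ∨ q.natDegree + d ≤ g.natDegree) ∧ r.natDegree + 1 ≤ d := by
    intro g
    set u : Polynomial ℝ := φ * Polynomial.C φ.leadingCoeff⁻¹ with hu_def
    have hu : u.Monic := Polynomial.monic_mul_leadingCoeff_inv φne
    have hud : u.natDegree = d := by
      rw [hu_def, Polynomial.natDegree_mul_C hc, hφd]
    refine ⟨Polynomial.C φ.leadingCoeff⁻¹ * (g /ₘ u), g %ₘ u, ?_, ?_, ?_⟩
    · conv_lhs => rw [← Polynomial.modByMonic_add_div g u]
      rw [hu_def]; ring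
    · by_cases h0 : g /ₘ u = 0
      · left; rw [h0, mul_zero]
      · right
        have hdlt : ¬ g.degree < u.degree := fun hlt =>
          h0 ((Polynomial.divByMonic_eq_zero_iff hu).2 hlt)
        have hdle : u.natDegree ≤ g.natDegree :=
          Polynomial.natDegree_le_natDegree (le_of_not_gt hdlt)
        rw [hud] at hdle
        have h1 : (Polynomial.C φ.leadingCoeff⁻¹ * (g /ₘ u)).natDegree
            ≤ g.natDegree - d := by
          calc (Polynomial.C φ.leadingCoeff⁻¹ * (g /ₘ u)).natDegree
              ≤ (g /ₘ u).natDegree := Polynomial.natDegree_C_mul_le _ _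
            _ = g.natDegree - d := by rw [Polynomial.natDegree_divByMonic g hu, hud]
        omega
    · rcases eq_or_ne (g %ₘ u) 0 with h0 | h0
      · simp [h0]; omega
      · have := Polynomial.degree_modByMonic_lt g hu
        have hdu : u.degree = (d : ℕ) := by
          rw [Polynomial.degree_eq_natDegree hu.ne_zero, hud]
        rw [hdu] at this
        have := (Polynomial.natDegree_lt_iff_degree_lt h0).2 this
        omega
  -- main induction
  suffices H : ∀ s, 1 ≤ s → ∀ g : Polynomial ℝ, g.natDegree + 2 ≤ d + d * s →
      ∃ Q : MvPolynomial (Fin 2) ℝ, Q.totalDegree + 2 ≤ d + s ∧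
      Polynomial.aeval (MvPolynomial.X 0 : MvPolynomial (Fin 2) ℝ) g - Q ∈
        Ideal.span {(MvPolynomial.X 1 : MvPolynomial (Fin 2) ℝ) ^ 1 -
          Polynomial.aeval (MvPolynomial.X 0 : MvPolynomial (Fin 2) ℝ) φ} by
    exact H s hs g hg
  intro s hs
  induction s, hs using Nat.le_induction with
  | base =>
    intro g hg
    obtain ⟨q, r, hgeq, hq, hr⟩ := div g
    refine ⟨MvPolynomial.X 1 * Polynomial.aeval (MvPolynomial.X 0) q +
      Polynomial.aeval (MvPolynomial.X 0) r, ?_, ?_⟩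
    · have h3 : (MvPolynomial.X 1 * Polynomial.aeval (MvPolynomial.X 0) q +
          (Polynomial.aeval (MvPolynomial.X 0) r : MvPolynomial (Fin 2) ℝ)).totalDegree ≤
          d - 1 := by
        rcases hq with rfl | hq
        · simp only [map_zero, mul_zero, zero_add]
          have h2 := totalDegree_aeval_X_le r 0
          omega
        refine (MvPolynomial.totalDegree_add _ _).trans (max_le ?_ ?_)
        · refine (MvPolynomial.totalDegree_mul _ _).trans ?_
          rw [MvPolynomial.totalDegree_X]
          have h1 := totalDegree_aeval_X_le q 0
          omega
        · have h2 := totalDegree_aeval_X_le r 0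
          omega
      omega
    · have key : Polynomial.aeval (MvPolynomial.X 0 : MvPolynomial (Fin 2) ℝ) g -
          (MvPolynomial.X 1 * Polynomial.aeval (MvPolynomial.X 0) q +
            Polynomial.aeval (MvPolynomial.X 0) r) =
          ((MvPolynomial.X 1 : MvPolynomial (Fin 2) ℝ) ^ 1 -
            Polynomial.aeval (MvPolynomial.X 0) φ) *
            (-(Polynomial.aeval (MvPolynomial.X 0) q)) := by
        rw [hgeq]; simp only [map_add, map_mul, pow_one]; ring
      rw [key]
      exact Ideal.mul_mem_right _ _ (Ideal.subset_span rfl)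
  | succ s hs ih =>
    intro g hg
    obtain ⟨q, r, hgeq, hq, hr⟩ := div g
    obtain ⟨Q', hQ'deg, hQ'mem⟩ := ih q (by
      rcases hq with rfl | hq
      · have := Nat.mul_le_mul hd hs
        simp only [Polynomial.natDegree_zero]
        omega
      · have hms : d * (s + 1) = d * s + d := by ring
        omega)
    refine ⟨MvPolynomial.X 1 * Q' + Polynomial.aeval (MvPolynomial.X 0) r, ?_, ?_⟩
    · have h3 : (MvPolynomial.X 1 * Q' +
          (Polynomial.aeval (MvPolynomial.X 0) r : MvPolynomial (Fin 2) ℝ)).totalDegree ≤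
          d + s - 1 := by
        refine (MvPolynomial.totalDegree_add _ _).trans (max_le ?_ ?_)
        · refine (MvPolynomial.totalDegree_mul _ _).trans ?_
          rw [MvPolynomial.totalDegree_X]
          omega
        · have h2 := totalDegree_aeval_X_le r 0
          omega
      omega
    · have key : Polynomial.aeval (MvPolynomial.X 0 : MvPolynomial (Fin 2) ℝ) g -
          (MvPolynomial.X 1 * Q' + Polynomial.aeval (MvPolynomial.X 0) r) =
          Polynomial.aeval (MvPolynomial.X 0) φ *
            (Polynomial.aeval (MvPolynomial.X 0) q - Q') +
          (-(((MvPolynomial.X 1 : MvPolynomial (Fin 2) ℝ) ^ 1 -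
            Polynomial.aeval (MvPolynomial.X 0) φ))) * Q' := by
        rw [hgeq]; simp only [map_add, map_mul, pow_one]; ring
      rw [key]
      exact Ideal.add_mem _ (Ideal.mul_mem_left _ _ hQ'mem)
        (Ideal.mul_mem_right _ _ (neg_mem (Ideal.subset_span rfl)))
end
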